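/- For every infinite set A ⊆ ℕ there exists an infinite set B ⊆ ℕ such that FS(A × B) contains no infinite arithmetic progression of type B; that is, there are no starting point (x₀,y₀) ∈ ℕ² and difference (d₁,d₂) with d₁ ≥ 1 and d₂ ≥ 1 such that (x₀ + l·d₁, y₀ + l·d₂) ∈ FS(A × B) for all l = 0, 1, 2, .... -/

import Mathlib

open scoped BigOperators

/-- `FS X` is the set of all sums of finitely many distinct elements of `X`
(sums over finite nonempty subsets of `X`). -/
def FS {α : Type*} [AddCommMonoid α] (X : Set α) : Set α :=
  {s | ∃ F : Finset α, F.Nonempty ∧ ↑F ⊆ X ∧ s = ∑ x ∈ F, x}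

/-- sum of distinct positive naturals is at least triangular number -/
lemma tri_aux (s : Finset ℕ) (h : ∀ a ∈ s, 1 ≤ a) :
    s.card * (s.card + 1) ≤ 2 * ∑ a ∈ s, a := by
  induction s using Finset.strongInduction with
  | _ s ih =>
    rcases s.eq_empty_or_nonempty with rfl | hs
    · simp
    · have hm : s.max' hs ∈ s := s.max'_mem hs
      set m := s.max' hs with hmdef
      have hcard : s.card ≤ m := by
        have hsub : s ⊆ Finset.Icc 1 m :=
          fun a ha => Finset.mem_Icc.2 ⟨h a ha, s.le_max' a ha⟩
        calc s.card ≤ (Finset.Icc 1 m).card := Finset.card_le_card hsub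
          _ = m := by simp
      have hih := ih (s.erase m) (Finset.erase_ssubset hm)
        (fun a ha => h a (Finset.mem_of_mem_erase ha))
      have hsum : ∑ a ∈ s, a = m + ∑ a ∈ s.erase m, a :=
        (Finset.add_sum_erase s id hm).symm
      have hcs : (s.erase m).card = s.card - 1 := Finset.card_erase_of_mem hm
      have hc1 : 1 ≤ s.card := Finset.card_pos.2 hs
      rw [hsum]
      rw [hcs] at hih
      obtain ⟨k, hk⟩ : ∃ k, s.card = k + 1 := ⟨s.card - 1, by omega⟩
      rw [hk] at hih hcard ⊢
      simp only [Nat.add_sub_cancel] at hih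
      nlinarith

/-- the key quadratic bound for membership in FS(A ×ˢ B) -/
lemma key_bound {A B : Set ℕ} (hA1 : ∀ a ∈ A, 1 ≤ a) {x y : ℕ}
    (hxy : (x, y) ∈ FS (A ×ˢ B)) {T : Finset ℕ}
    (hT : ∀ b ∈ B, b ≤ y → b ∈ T) :
    y * y ≤ 2 * x * ((∑ b ∈ T, b) * (∑ b ∈ T, b)) := by
  obtain ⟨F, hFne, hFsub, hFeq⟩ := hxy
  have hx : x = ∑ p ∈ F, p.1 := by
    have := congrArg Prod.fst hFeq
    simpa [Prod.fst_sum] using this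
  have hy : y = ∑ p ∈ F, p.2 := by
    have := congrArg Prod.snd hFeq
    simpa [Prod.snd_sum] using this
  have hmem : ∀ p ∈ F, p.1 ∈ A ∧ p.2 ∈ B := by
    intro p hp
    have := hFsub hp
    simpa [Set.mem_prod] using this
  have hbley : ∀ p ∈ F, p.2 ≤ y := by
    intro p hp
    rw [hy]
    exact Finset.single_le_sum (f := fun p : ℕ × ℕ => p.2) (fun i _ => Nat.zero_le _) hp
  set I := F.image Prod.snd with hIdef
  have hIT : I ⊆ T := by
    intro b hb
    obtain ⟨p, hp, rfl⟩ := Finset.mem_image.1 hb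
    exact hT _ (hmem p hp).2 (hbley p hp)
  set m : ℕ → ℕ := fun b => (F.filter (fun p => p.2 = b)).card with hmdef
  have hy2 : y = ∑ b ∈ I, m b * b := by
    rw [hy, ← Finset.sum_fiberwise_of_maps_to
      (g := Prod.snd) (fun p hp => Finset.mem_image_of_mem _ hp)
      (f := fun p : ℕ × ℕ => p.2)]
    refine Finset.sum_congr rfl (fun b _ => ?_)
    rw [Finset.sum_congr rfl (fun p hp => (Finset.mem_filter.1 hp).2)]
    simp [hmdef, mul_comm]
  have hm2 : ∀ b, m b * m b ≤ 2 * x := by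
    intro b
    set Fb := F.filter (fun p => p.2 = b) with hFbdef
    have hinj : ∀ p ∈ Fb, ∀ q ∈ Fb, p.1 = q.1 → p = q := by
      intro p hp q hq h1
      have hp2 := (Finset.mem_filter.1 hp).2
      have hq2 := (Finset.mem_filter.1 hq).2
      exact Prod.ext h1 (hp2.trans hq2.symm)
    have hcard : (Fb.image Prod.fst).card = m b := Finset.card_image_of_injOn hinj
    have hsumeq : ∑ a ∈ Fb.image Prod.fst, a = ∑ p ∈ Fb, p.1 :=
      Finset.sum_image hinj
    have htri := tri_aux (Fb.image Prod.fst) (by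
      intro a ha
      obtain ⟨p, hp, rfl⟩ := Finset.mem_image.1 ha
      exact hA1 _ (hmem p (Finset.mem_of_mem_filter p hp)).1)
    have hle : ∑ p ∈ Fb, p.1 ≤ x := by
      rw [hx]
      exact Finset.sum_le_sum_of_subset (Finset.filter_subset _ _)
    calc m b * m b ≤ m b * (m b + 1) := Nat.mul_le_mul_left _ (Nat.le_succ _)
      _ = (Fb.image Prod.fst).card * ((Fb.image Prod.fst).card + 1) := by rw [hcard]
      _ ≤ 2 * ∑ a ∈ Fb.image Prod.fst, a := htri
      _ = 2 * ∑ p ∈ Fb, p.1 := by rw [hsumeq]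
      _ ≤ 2 * x := Nat.mul_le_mul_left _ hle
  calc y * y = (∑ b ∈ I, m b * b) * (∑ c ∈ I, m c * c) := by rw [← hy2]
    _ = ∑ b ∈ I, ∑ c ∈ I, (m b * b) * (m c * c) := Finset.sum_mul_sum _ _ _ _
    _ ≤ ∑ b ∈ I, ∑ c ∈ I, (2 * x) * (b * c) := by
        refine Finset.sum_le_sum (fun b _ => Finset.sum_le_sum (fun c _ => ?_))
        have hbc : m b * m c ≤ 2 * x := by
          rcases le_total (m b) (m c) with h | h
          · exact le_trans (Nat.mul_le_mul_right _ h) (hm2 c)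
          · exact le_trans (Nat.mul_le_mul_left _ h) (hm2 b)
        calc (m b * b) * (m c * c) = (m b * m c) * (b * c) := by ring
          _ ≤ (2 * x) * (b * c) := Nat.mul_le_mul_right _ hbc
    _ = 2 * x * ((∑ b ∈ I, b) * (∑ c ∈ I, c)) := by
        rw [Finset.sum_mul_sum]
        rw [Finset.mul_sum]
        exact Finset.sum_congr rfl (fun b _ => by rw [Finset.mul_sum])
    _ ≤ 2 * x * ((∑ b ∈ T, b) * (∑ b ∈ T, b)) := by
        have hsle : ∑ b ∈ I, b ≤ ∑ b ∈ T, b :=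
          Finset.sum_le_sum_of_subset hIT
        exact Nat.mul_le_mul_left _ (Nat.mul_le_mul hsle hsle)

lemma sumf_bound : ∀ n : ℕ, ∑ i ∈ Finset.range n, 2 ^ 4 ^ (i + 1) ≤ 2 * 2 ^ 4 ^ n := by
  intro n
  induction n with
  | zero => simp
  | succ n ih =>
    rw [Finset.sum_range_succ]
    have h1 : 4 ^ n + 1 ≤ 4 ^ (n + 1) := by
      have : 1 ≤ 4 ^ n := Nat.one_le_pow _ _ (by norm_num)
      calc 4 ^ n + 1 ≤ 4 ^ n + 4 ^ n := by omega
        _ ≤ 4 * 4 ^ n := by omega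
        _ = 4 ^ (n + 1) := by ring
    have h2 : 2 * 2 ^ 4 ^ n ≤ 2 ^ 4 ^ (n + 1) := by
      calc 2 * 2 ^ 4 ^ n = 2 ^ (4 ^ n + 1) := by ring
        _ ≤ 2 ^ 4 ^ (n + 1) := Nat.pow_le_pow_right (by norm_num) h1
    omega

/-- For every infinite `A ⊆ ℕ` there is an infinite `B ⊆ ℕ` such that `FS(A × B)`
contains no infinite arithmetic progression of type B (difference with both
coordinates nonzero). -/
theorem stmt_12 (A : Set ℕ) (hA1 : ∀ a ∈ A, 1 ≤ a) (hAinf : A.Infinite) :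
    ∃ B : Set ℕ, (∀ b ∈ B, 1 ≤ b) ∧ B.Infinite ∧
      ¬ ∃ (x₀ y₀ d₁ d₂ : ℕ), 1 ≤ x₀ ∧ 1 ≤ y₀ ∧ 1 ≤ d₁ ∧ 1 ≤ d₂ ∧
        ∀ l : ℕ, (x₀ + l * d₁, y₀ + l * d₂) ∈ FS (A ×ˢ B) := by

  set f : ℕ → ℕ := fun n => 2 ^ 4 ^ (n + 1) with hfdef
  have hfmono : StrictMono f := by
    intro a b hab
    exact Nat.pow_lt_pow_right one_lt_two
      (Nat.pow_lt_pow_right (by norm_num) (by omega))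
  refine ⟨Set.range f, ?_, Set.infinite_range_of_injective hfmono.injective, ?_⟩
  · rintro b ⟨i, rfl⟩
    exact Nat.one_le_two_pow
  rintro ⟨x₀, y₀, d₁, d₂, hx₀, hy₀, hd₁, hd₂, hAP⟩
  set n := x₀ + y₀ + d₁ + d₂ + 66 with hndef
  set G := 2 ^ 4 ^ n with hGdef
  have hnG : n < G := by
    calc n ≤ 4 ^ n := Nat.le_of_lt (Nat.lt_pow_self (by norm_num : 1 < 4))
      _ < 2 ^ 4 ^ n := Nat.lt_two_pow_self
  have hfn : f n = G ^ 4 := by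
    rw [hfdef, hGdef, ← pow_mul]
    ring_nf
  have hGfn : G ≤ f n := by
    rw [hfn]
    exact Nat.le_self_pow (by norm_num) G
  have hy₀fn : y₀ < f n := by omega
  set l := (f n - 1 - y₀) / d₂ with hldef
  set y := y₀ + l * d₂ with hydef
  have hdm : l * d₂ + (f n - 1 - y₀) % d₂ = f n - 1 - y₀ := by
    rw [mul_comm]; exact Nat.div_add_mod _ _
  have hmlt : (f n - 1 - y₀) % d₂ < d₂ := Nat.mod_lt _ (by omega)
  have hylt : y < f n := by
    rw [hydef]
    set k := l * d₂
    omega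
  have hyged : f n ≤ y + d₂ := by
    rw [hydef]
    set k := l * d₂
    omega
  set T := (Finset.range n).image f with hTdef
  have hT : ∀ b ∈ Set.range f, b ≤ y → b ∈ T := by
    rintro b ⟨i, rfl⟩ hble
    exact Finset.mem_image_of_mem _ (Finset.mem_range.2 (hfmono.lt_iff_lt.1 (by omega)))
  have hkey := key_bound hA1 (hAP l) hT
  have hS : ∑ b ∈ T, b ≤ 2 * G := by
    rw [hTdef, Finset.sum_image (fun a _ b _ h => hfmono.injective h)]
    exact sumf_bound n
  have hlley : l ≤ y := by
    calc l ≤ l * d₂ := Nat.le_mul_of_pos_right l (by omega)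
      _ ≤ y := by omega
  have hxle : x₀ + l * d₁ ≤ 2 * G ^ 5 := by
    have h1 : l ≤ G ^ 4 := by omega
    have h2 : d₁ ≤ G := by omega
    have h3 : l * d₁ ≤ G ^ 4 * G := Nat.mul_le_mul h1 h2
    have h4 : G ^ 4 * G = G ^ 5 := by ring
    have h5 : x₀ ≤ G ^ 5 := by
      have : G ≤ G ^ 5 := Nat.le_self_pow (by norm_num) G
      omega
    omega
  have hup : y * y ≤ 16 * G ^ 7 := by
    calc y * y ≤ 2 * (x₀ + l * d₁) * ((∑ b ∈ T, b) * (∑ b ∈ T, b)) := hkey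
      _ ≤ 2 * (2 * G ^ 5) * ((2 * G) * (2 * G)) :=
          Nat.mul_le_mul (Nat.mul_le_mul_left _ hxle) (Nat.mul_le_mul hS hS)
      _ = 16 * G ^ 7 := by ring
  have hlow : G ^ 8 ≤ (y + G) * (y + G) := by
    have h1 : G ^ 4 ≤ y + G := by omega
    calc G ^ 8 = G ^ 4 * G ^ 4 := by ring
      _ ≤ (y + G) * (y + G) := Nat.mul_le_mul h1 h1
  have hyle : y ≤ G ^ 4 := by omega
  have hexp : (y + G) * (y + G) = y * y + 2 * (G * y) + G * G := by ring
  have hGy : G * y ≤ G ^ 5 := by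
    calc G * y ≤ G * G ^ 4 := Nat.mul_le_mul_left _ hyle
      _ = G ^ 5 := by ring
  have hGG : G * G ≤ G ^ 7 := by
    calc G * G = G ^ 2 := by ring
      _ ≤ G ^ 7 := Nat.pow_le_pow_right (by omega) (by norm_num)
  have h57 : G ^ 5 ≤ G ^ 7 := Nat.pow_le_pow_right (by omega) (by norm_num)
  have hfinal : G ^ 8 ≤ 19 * G ^ 7 := by
    calc G ^ 8 ≤ y * y + 2 * (G * y) + G * G := by omega
      _ ≤ 16 * G ^ 7 + 2 * G ^ 7 + G ^ 7 := by
          have : 2 * (G * y) ≤ 2 * G ^ 7 := by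
            have := le_trans hGy h57
            omega
          omega
      _ = 19 * G ^ 7 := by ring
  have h8 : G ^ 8 = G * G ^ 7 := by ring
  have hG7 : 0 < G ^ 7 := pow_pos (by omega) _
  have : G ≤ 19 := by
    have := hfinal
    rw [h8] at this
    exact Nat.le_of_mul_le_mul_right (by omega) hG7
  omega
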